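/- For the set B₀ = [p] = {1,...,p} (so its complement is [p+1..p+q]), the unique feasible matching is M₀ = {(p-i+1, p+i) : i = 1,...,q}. That is, 𝓜(B₀) = {M₀}. -/

import Mathlib

open Finset

/-- The two-element set of endpoints of an arc `π = (i,j)`. -/
def arcSet (π : ℕ × ℕ) : Finset ℕ := {π.1, π.2}

/-- `M` is a feasible matching for the `p`-subset `A` of `[p+q] = {1,…,p+q}`:
`q` pairwise disjoint nested arcs `(i,j)`, `i<j`, each containing exactly one element
of `A` and one of its complement, with no free element covered by an arc's interval. -/
def IsFeasibleMatching (p q : ℕ) (A : Finset ℕ) (M : Finset (ℕ × ℕ)) : Prop :=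
  M.card = q ∧
  (∀ π ∈ M, 1 ≤ π.1 ∧ π.1 < π.2 ∧ π.2 ≤ p + q) ∧
  (∀ π ∈ M, ∀ π' ∈ M, π ≠ π' → Disjoint (arcSet π) (arcSet π')) ∧
  (∀ π ∈ M, (arcSet π ∩ A).card = 1 ∧
            (arcSet π ∩ (Finset.Icc 1 (p + q) \ A)).card = 1) ∧
  (∀ π ∈ M, ∀ π' ∈ M,
      Disjoint (Finset.Icc π.1 π.2) (Finset.Icc π'.1 π'.2) ∨
      Finset.Icc π.1 π.2 ⊆ Finset.Icc π'.1 π'.2 ∨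
      Finset.Icc π'.1 π'.2 ⊆ Finset.Icc π.1 π.2) ∧
  (∀ k ∈ Finset.Icc 1 (p + q), (∀ π ∈ M, k ∉ arcSet π) →
      ∀ π ∈ M, k ∉ Finset.Icc π.1 π.2)

open Classical in
/-- The number of members of the collection `𝒜` for which `M` is a feasible matching. -/
noncomputable def feasCount (p q : ℕ) (𝒜 : Finset (Finset ℕ)) (M : Finset (ℕ × ℕ)) : ℕ :=
  (𝒜.filter (fun A => IsFeasibleMatching p q A M)).card

/-- Two collections of `p`-subsets of `[p+q]` are balanced if every matching is a
feasible matching for equally many members of each. -/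
def BalancedPair (p q : ℕ) (𝒜 𝒜' : Finset (Finset ℕ)) : Prop :=
  ∀ M : Finset (ℕ × ℕ), feasCount p q 𝒜 M = feasCount p q 𝒜' M


/-- For `B₀ = [p] = {1,…,p}` (complement `[p+1..p+q]`), the unique feasible matching is
`M₀ = {(p-i+1, p+i) : i = 1,…,q}`, i.e. `𝓜(B₀) = {M₀}`. -/
theorem stmt8 (p q : ℕ) (hq : 1 ≤ q) (hpq : q ≤ p) :
    ∀ M : Finset (ℕ × ℕ),
      IsFeasibleMatching p q (Finset.Icc 1 p) M ↔
        M = (Finset.Icc 1 q).image (fun i => (p - i + 1, p + i)) := by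
  classical
  intro M
  constructor
  · rintro ⟨hcard, hbound, hdisj, hone, hnest, hfree⟩
    -- each arc has its left endpoint ≤ p and right endpoint ≥ p+1
    have hsplit : ∀ π ∈ M, π.1 ≤ p ∧ p + 1 ≤ π.2 := by
      intro π hπ
      obtain ⟨h1, h2⟩ := hone π hπ
      obtain ⟨hb1, hb2, hb3⟩ := hbound π hπ
      obtain ⟨x, hx⟩ := Finset.card_eq_one.mp h1
      obtain ⟨y, hy⟩ := Finset.card_eq_one.mp h2
      have hxm : x ∈ arcSet π ∩ Finset.Icc 1 p := hx ▸ Finset.mem_singleton_self x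
      have hym : y ∈ arcSet π ∩ (Finset.Icc 1 (p + q) \ Finset.Icc 1 p) :=
        hy ▸ Finset.mem_singleton_self y
      simp only [arcSet, Finset.mem_inter, Finset.mem_insert, Finset.mem_singleton,
        Finset.mem_sdiff, Finset.mem_Icc] at hxm hym
      omega
    -- every point of an arc's interval is an endpoint of an arc nested inside it
    have hcover : ∀ π ∈ M, ∀ k ∈ Finset.Icc π.1 π.2,
        ∃ π' ∈ M, k ∈ arcSet π' ∧ Finset.Icc π'.1 π'.2 ⊆ Finset.Icc π.1 π.2 := by
      intro π hπ k hk
      have hb := hbound π hπ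
      have hk' : k ∈ Finset.Icc 1 (p + q) := by
        simp only [Finset.mem_Icc] at hk ⊢; omega
      by_contra hcon
      push_neg at hcon
      have hex : ∃ π' ∈ M, k ∈ arcSet π' := by
        by_contra h2
        push_neg at h2
        exact hfree k hk' h2 π hπ hk
      obtain ⟨π', hπ', hkπ'⟩ := hex
      have hsub := hcon π' hπ' hkπ'
      rcases hnest π' hπ' π hπ with hd | hs | hs'
      · have hp1 : p ∈ Finset.Icc π'.1 π'.2 := by
          have := hsplit π' hπ'; simp only [Finset.mem_Icc]; omega
        have hp2 : p ∈ Finset.Icc π.1 π.2 := by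
          have := hsplit π hπ; simp only [Finset.mem_Icc]; omega
        exact Finset.disjoint_left.mp hd hp1 hp2
      · exact hsub hs
      · by_cases heq : π' = π
        · exact hsub (heq ▸ Finset.Subset.refl _)
        · have hdd := hdisj π' hπ' π hπ heq
          simp only [arcSet, Finset.mem_insert, Finset.mem_singleton] at hkπ'
          have hk2 := Finset.mem_Icc.mp hk
          have hb' := hbound π' hπ'
          have h1 : π.1 ∈ Finset.Icc π'.1 π'.2 := hs' (by simp only [Finset.mem_Icc]; omega)
          have h2 : π.2 ∈ Finset.Icc π'.1 π'.2 := hs' (by simp only [Finset.mem_Icc]; omega)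
          simp only [Finset.mem_Icc] at h1 h2
          have hmem : π.1 ∈ arcSet π' ∨ π.2 ∈ arcSet π' := by
            rcases hkπ' with h | h
            · left; simp only [arcSet, Finset.mem_insert, Finset.mem_singleton]; omega
            · right; simp only [arcSet, Finset.mem_insert, Finset.mem_singleton]; omega
          rcases hmem with h | h
          · exact Finset.disjoint_left.mp hdd h
              (by simp [arcSet])
          · exact Finset.disjoint_left.mp hdd h
              (by simp [arcSet])
    -- key: each arc (a,b) satisfies a + b = 2p + 1
    have hsum : ∀ π ∈ M, π.1 + π.2 = 2 * p + 1 := by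
      intro π hπ
      set S := M.filter (fun π' => Finset.Icc π'.1 π'.2 ⊆ Finset.Icc π.1 π.2) with hS
      have hU : Finset.Icc π.1 π.2 = S.biUnion arcSet := by
        apply Finset.Subset.antisymm
        · intro k hk
          obtain ⟨π', hπ', hkπ', hsub⟩ := hcover π hπ k hk
          exact Finset.mem_biUnion.mpr ⟨π', Finset.mem_filter.mpr ⟨hπ', hsub⟩, hkπ'⟩
        · intro k hk
          obtain ⟨π', hπ', hkπ'⟩ := Finset.mem_biUnion.mp hk
          obtain ⟨hπ'M, hsub⟩ := Finset.mem_filter.mp hπ'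
          apply hsub
          have hb' := hbound π' hπ'M
          simp only [arcSet, Finset.mem_insert, Finset.mem_singleton] at hkπ'
          simp only [Finset.mem_Icc]; omega
      have hcount : ∀ T : Finset ℕ, (∀ π' ∈ M, (arcSet π' ∩ T).card = 1) →
          (Finset.Icc π.1 π.2 ∩ T).card = S.card := by
        intro T hT
        have heq : Finset.Icc π.1 π.2 ∩ T = S.biUnion (fun π' => arcSet π' ∩ T) := by
          rw [hU]
          ext k
          simp only [Finset.mem_inter, Finset.mem_biUnion]
          tauto
        rw [heq, Finset.card_biUnion (fun x hx y hy hxy =>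
          (hdisj x (Finset.mem_filter.mp hx).1 y (Finset.mem_filter.mp hy).1 hxy).mono
            Finset.inter_subset_left Finset.inter_subset_left)]
        rw [Finset.sum_congr rfl (fun π' hπ' => hT π' (Finset.mem_filter.mp hπ').1)]
        simp
        rfl
      have c1 := hcount (Finset.Icc 1 p) (fun π' h => (hone π' h).1)
      have c2 := hcount (Finset.Icc 1 (p + q) \ Finset.Icc 1 p) (fun π' h => (hone π' h).2)
      have hb := hbound π hπ
      have hsp := hsplit π hπ
      have e1 : Finset.Icc π.1 π.2 ∩ Finset.Icc 1 p = Finset.Icc π.1 p := by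
        ext k; simp only [Finset.mem_inter, Finset.mem_Icc]; omega
      have e2 : Finset.Icc π.1 π.2 ∩ (Finset.Icc 1 (p + q) \ Finset.Icc 1 p)
          = Finset.Icc (p + 1) π.2 := by
        ext k
        simp only [Finset.mem_inter, Finset.mem_sdiff, Finset.mem_Icc]
        omega
      rw [e1, Nat.card_Icc] at c1
      rw [e2, Nat.card_Icc] at c2
      omega
    -- conclude M = M₀ by subset + cardinality
    apply Finset.eq_of_subset_of_card_le
    · intro π hπ
      have hsp := hsplit π hπ
      have hb := hbound π hπ
      have hs := hsum π hπ
      simp only [Finset.mem_image, Finset.mem_Icc]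
      exact ⟨π.2 - p, ⟨by omega, by omega⟩, Prod.ext (by omega) (by omega)⟩
    · calc ((Finset.Icc 1 q).image (fun i => (p - i + 1, p + i))).card
          ≤ (Finset.Icc 1 q).card := Finset.card_image_le
        _ = q := by rw [Nat.card_Icc]; omega
        _ = M.card := hcard.symm
  · rintro rfl
    refine ⟨?_, ?_, ?_, ?_, ?_, ?_⟩
    · rw [Finset.card_image_of_injOn (fun i hi j hj h => by
        have := congrArg Prod.snd h
        simp only at this
        omega)]
      rw [Nat.card_Icc]; omega
    · intro π hπ
      simp only [Finset.mem_image, Finset.mem_Icc] at hπ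
      obtain ⟨i, ⟨hi1, hi2⟩, rfl⟩ := hπ
      refine ⟨by omega, by omega, by omega⟩
    · intro π hπ π' hπ' hne
      simp only [Finset.mem_image, Finset.mem_Icc] at hπ hπ'
      obtain ⟨i, ⟨hi1, hi2⟩, rfl⟩ := hπ
      obtain ⟨j, ⟨hj1, hj2⟩, rfl⟩ := hπ'
      have hij : i ≠ j := fun h => hne (by rw [h])
      rw [Finset.disjoint_left]
      intro x hx hy
      simp only [arcSet, Finset.mem_insert, Finset.mem_singleton] at hx hy
      omega
    · intro π hπ
      simp only [Finset.mem_image, Finset.mem_Icc] at hπ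
      obtain ⟨i, ⟨hi1, hi2⟩, rfl⟩ := hπ
      constructor
      · have : arcSet (p - i + 1, p + i) ∩ Finset.Icc 1 p = {p - i + 1} := by
          ext k
          simp only [arcSet, Finset.mem_inter, Finset.mem_insert, Finset.mem_singleton,
            Finset.mem_Icc]
          omega
        rw [this, Finset.card_singleton]
      · have : arcSet (p - i + 1, p + i) ∩ (Finset.Icc 1 (p + q) \ Finset.Icc 1 p)
            = {p + i} := by
          ext k
          simp only [arcSet, Finset.mem_inter, Finset.mem_insert, Finset.mem_singleton,
            Finset.mem_sdiff, Finset.mem_Icc]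
          omega
        rw [this, Finset.card_singleton]
    · intro π hπ π' hπ'
      simp only [Finset.mem_image, Finset.mem_Icc] at hπ hπ'
      obtain ⟨i, ⟨hi1, hi2⟩, rfl⟩ := hπ
      obtain ⟨j, ⟨hj1, hj2⟩, rfl⟩ := hπ'
      rcases le_total i j with h | h
      · right; left
        intro k hk
        simp only [Finset.mem_Icc] at hk ⊢
        omega
      · right; right
        intro k hk
        simp only [Finset.mem_Icc] at hk ⊢
        omega
    · intro k hk hne π hπ
      simp only [Finset.mem_image, Finset.mem_Icc] at hπ
      obtain ⟨i, ⟨hi1, hi2⟩, rfl⟩ := hπ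
      simp only [Finset.mem_Icc] at hk
      rw [Finset.mem_Icc]
      rintro ⟨hk1, hk2⟩
      by_cases hkp : k ≤ p
      · have hmem : (p - (p - k + 1) + 1, p + (p - k + 1))
            ∈ (Finset.Icc 1 q).image (fun i => (p - i + 1, p + i)) := by
          apply Finset.mem_image_of_mem
          rw [Finset.mem_Icc]; omega
        apply hne _ hmem
        simp only [arcSet, Finset.mem_insert, Finset.mem_singleton]
        omega
      · have hmem : (p - (k - p) + 1, p + (k - p))
            ∈ (Finset.Icc 1 q).image (fun i => (p - i + 1, p + i)) := by
          apply Finset.mem_image_of_mem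
          rw [Finset.mem_Icc]; omega
        apply hne _ hmem
        simp only [arcSet, Finset.mem_insert, Finset.mem_singleton]
        omega
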